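/- arXiv:1606.04804 — 3 statements merged into one kernel-verified Lean document; each statement's English description precedes it below -/
import Mathlib

section
/- Let x : ℤ → ℂ be finitely supported and let a, b, c, d be reals with ad − bc = 1, b > 0. Then for every n ∈ ℤ, x[n] = ∫_{-πb}^{πb} L_{(a,b,c,d)}[x](ω) · conj(K_{(a,b,c,d)}(ω, n)) dω, where K_{(a,b,c,d)}(ω,t) = (2πb)^{-1/2} e^{-iπ/4} e^{(i/2)((a/b)t² − (2/b)ωt + (d/b)ω²)}. That is, the discrete-time linear canonical transform is inverted by integration against the conjugate kernel over [−πb, πb]. -/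
noncomputable def lctKernel (a b d : ℝ) (ω t : ℝ) : ℂ :=
  ((2 * Real.pi * b : ℝ) : ℂ) ^ (-(1/2) : ℂ) * Complex.exp (-(Complex.I * Real.pi / 4)) *
    Complex.exp ((Complex.I / 2) *
      (((a / b) * t ^ 2 - (2 / b) * ω * t + (d / b) * ω ^ 2 : ℝ) : ℂ))

noncomputable def dLCT (a b d : ℝ) (x : ℤ → ℂ) (ω : ℝ) : ℂ :=
  ∑' n : ℤ, x n * lctKernel a b d ω (n : ℝ)

noncomputable def dFourier (y : ℤ → ℂ) (ω : ℝ) : ℂ :=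
  ∑' n : ℤ, y n * Complex.exp (-(Complex.I * ω * (n : ℝ)))

noncomputable def acorr (y : ℤ → ℂ) (n : ℤ) : ℂ :=
  ∑' k : ℤ, y k * (starRingEnd ℂ) (y (k + n))

open Complex Real

lemma kernel_prod (a b d : ℝ) (hb : 0 < b) (m n : ℝ) (ω : ℝ) :
    lctKernel a b d ω m * (starRingEnd ℂ) (lctKernel a b d ω n)
    = (((2*π*b)⁻¹ : ℝ):ℂ) * (Complex.exp ((Complex.I/2) * (((a/b) * (m^2 - n^2) : ℝ):ℂ))
        * Complex.exp (-(Complex.I * ((m - n : ℝ):ℂ) / b) * ω)) := by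
  have hpos : (0:ℝ) < 2 * π * b := by positivity
  have hbne : (b:ℂ) ≠ 0 := by exact_mod_cast hb.ne'
  have hC : ((2*π*b : ℝ):ℂ) ^ (-(1/2):ℂ) = (((2*π*b) ^ (-(1/2):ℝ) : ℝ):ℂ) := by
    rw [show (-(1/2):ℂ) = ((-(1/2):ℝ):ℂ) by norm_num, ← Complex.ofReal_cpow hpos.le]
  have key : ∀ (r z1 z2 z3 z4 : ℂ),
      (r * Complex.exp z1 * Complex.exp z2) * (r * Complex.exp z3 * Complex.exp z4)
        = r * r * Complex.exp (z1 + z3) * Complex.exp (z2 + z4) := by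
    intros; rw [Complex.exp_add, Complex.exp_add]; ring
  unfold lctKernel
  rw [hC, map_mul, map_mul, ← Complex.exp_conj, ← Complex.exp_conj, Complex.conj_ofReal, key]
  have hr : (((2*π*b) ^ (-(1/2):ℝ) : ℝ):ℂ) * (((2*π*b) ^ (-(1/2):ℝ) : ℝ):ℂ)
      = (((2*π*b)⁻¹ : ℝ):ℂ) := by
    rw [← Complex.ofReal_mul, ← Real.rpow_add hpos]
    norm_num [Real.rpow_neg_one]
  have h1 : -(Complex.I * ↑π / 4) + (starRingEnd ℂ) (-(Complex.I * ↑π / 4)) = 0 := by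
    simp only [map_neg, map_div₀, map_mul, Complex.conj_I, Complex.conj_ofReal, map_ofNat]
    ring
  rw [hr, h1, Complex.exp_zero, mul_one]
  have h2 : Complex.I / 2 * (((a / b) * m ^ 2 - (2 / b) * ω * m + (d / b) * ω ^ 2 : ℝ):ℂ)
      + (starRingEnd ℂ) (Complex.I / 2 * (((a / b) * n ^ 2 - (2 / b) * ω * n + (d / b) * ω ^ 2 : ℝ):ℂ))
      = (Complex.I/2) * (((a/b) * (m^2 - n^2) : ℝ):ℂ) + (-(Complex.I * ((m - n : ℝ):ℂ) / b) * ω) := by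
    simp only [map_mul, map_div₀, Complex.conj_I, Complex.conj_ofReal, map_ofNat]
    push_cast
    field_simp
    ring
  rw [h2, Complex.exp_add, mul_assoc]

lemma integral_cexp_aux (b : ℝ) (hb : 0 < b) (k : ℤ) (hk : k ≠ 0) :
    ∫ ω in (-(π * b))..(π * b), Complex.exp (-(Complex.I * (k:ℂ) / b) * ω) = 0 := by
  have hbne : (b:ℂ) ≠ 0 := by exact_mod_cast hb.ne'
  rw [integral_exp_mul_complex]
  · have h1 : -(Complex.I * (k:ℂ) / b) * (π * b : ℝ) = ((-k : ℤ):ℂ) * (π * Complex.I) := by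
      push_cast; field_simp
    have h2 : -(Complex.I * (k:ℂ) / b) * (-(π * b) : ℝ) = (k:ℂ) * (π * Complex.I) := by
      push_cast; field_simp
    rw [h1, h2, Complex.exp_int_mul, Complex.exp_int_mul, Complex.exp_pi_mul_I]
    rw [zpow_neg, ← inv_zpow, inv_neg, inv_one]
    simp
  · simp only [ne_eq, neg_eq_zero, div_eq_zero_iff, mul_eq_zero]
    push_neg
    exact ⟨⟨Complex.I_ne_zero, by exact_mod_cast hk⟩, hbne⟩

lemma kernel_continuous (a b d : ℝ) (t : ℝ) :
    Continuous (fun ω : ℝ => lctKernel a b d ω t) := by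
  unfold lctKernel
  fun_prop

lemma integral_kernel_prod (a b d : ℝ) (hb : 0 < b) (m n : ℤ) :
    (∫ ω in (-(π * b))..(π * b),
        lctKernel a b d ω (m : ℝ) * (starRingEnd ℂ) (lctKernel a b d ω (n : ℝ)))
      = if m = n then 1 else 0 := by
  have hpos : (0:ℝ) < 2 * π * b := by positivity
  simp only [kernel_prod a b d hb (m:ℝ) (n:ℝ)]
  rw [intervalIntegral.integral_const_mul, intervalIntegral.integral_const_mul]
  by_cases hmn : m = n
  · subst hmn
    simp only [sub_self, Complex.ofReal_zero, mul_zero, zero_div, neg_zero, zero_mul,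
      Complex.exp_zero, mul_one, if_pos rfl]
    rw [intervalIntegral.integral_const]
    simp only [Complex.real_smul, mul_one, one_mul]
    push_cast
    have h2 : (2*(π:ℂ)*b) ≠ 0 := by exact_mod_cast hpos.ne'
    field_simp
    rw [mul_div_right_comm, div_self (by exact_mod_cast hb.ne' : (b:ℂ) ≠ 0), one_mul]
    norm_num
  · have : ((m:ℝ) - (n:ℝ) : ℝ) = ((m - n : ℤ) : ℝ) := by push_cast; ring
    rw [this]
    have : ((((m - n : ℤ) : ℝ)):ℂ) = ((m - n : ℤ):ℂ) := by push_cast; ring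
    rw [this, integral_cexp_aux b hb (m - n) (sub_ne_zero.mpr hmn)]
    simp [hmn]

theorem dlct_inversion (x : ℤ → ℂ) (hx : (Function.support x).Finite)
    (a b c d : ℝ) (habcd : a * d - b * c = 1) (hb : 0 < b) (n : ℤ) :
    x n = ∫ ω in (-(Real.pi * b))..(Real.pi * b),
      dLCT a b d x ω * (starRingEnd ℂ) (lctKernel a b d ω (n : ℝ)) := by
  classical
  set s := hx.toFinset with hs
  have hdlct : ∀ ω, dLCT a b d x ω = ∑ m ∈ s, x m * lctKernel a b d ω (m : ℝ) := by
    intro ω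
    apply tsum_eq_sum
    intro m hm
    have : x m = 0 := by
      by_contra h
      exact hm (hx.mem_toFinset.mpr h)
    simp [this]
  have hcont : ∀ m : ℤ, Continuous (fun ω : ℝ =>
      x m * lctKernel a b d ω (m : ℝ) * (starRingEnd ℂ) (lctKernel a b d ω (n : ℝ))) := by
    intro m
    exact ((continuous_const.mul (kernel_continuous a b d m)).mul
      (Complex.continuous_conj.comp (kernel_continuous a b d n)))
  calc x n
      = ∑ m ∈ s, x m * (if m = n then 1 else 0) := by
        simp only [mul_ite, mul_one, mul_zero, Finset.sum_ite_eq' s n (fun m => x m)]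
        by_cases h : n ∈ s
        · simp [h]
        · simp only [h, if_false]
          by_contra hxn
          exact h (hx.mem_toFinset.mpr (by simpa using hxn))
    _ = ∑ m ∈ s, x m * ∫ ω in (-(π * b))..(π * b),
          lctKernel a b d ω (m : ℝ) * (starRingEnd ℂ) (lctKernel a b d ω (n : ℝ)) := by
        refine Finset.sum_congr rfl fun m _ => ?_
        rw [integral_kernel_prod a b d hb m n]
    _ = ∑ m ∈ s, ∫ ω in (-(π * b))..(π * b),
          x m * lctKernel a b d ω (m : ℝ) * (starRingEnd ℂ) (lctKernel a b d ω (n : ℝ)) := by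
        refine Finset.sum_congr rfl fun m _ => ?_
        rw [← intervalIntegral.integral_const_mul]
        congr 1; ext ω; ring
    _ = ∫ ω in (-(π * b))..(π * b), ∑ m ∈ s,
          x m * lctKernel a b d ω (m : ℝ) * (starRingEnd ℂ) (lctKernel a b d ω (n : ℝ)) := by
        rw [intervalIntegral.integral_finset_sum]
        intro m _
        exact (hcont m).intervalIntegrable _ _
    _ = ∫ ω in (-(π * b))..(π * b),
          dLCT a b d x ω * (starRingEnd ℂ) (lctKernel a b d ω (n : ℝ)) := by
        congr 1; ext ω
        rw [hdlct ω, Finset.sum_mul]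
end

section
/- Let x : ℤ → ℂ be finitely supported and let a, b, c, d be reals with ad − bc = 1, b ≠ 0. Then for every α ∈ ℝ and n₀ ∈ ℤ, the signal y[n] = e^{iα} e^{-i a n₀ n / b} x[n − n₀] satisfies |L_{(a,b,c,d)}[y](ω)| = |L_{(a,b,c,d)}[x](ω)| for all ω ∈ ℝ. -/
theorem dlct_intensity_rotation_shift (x : ℤ → ℂ) (hx : (Function.support x).Finite)
    (a b c d : ℝ) (habcd : a * d - b * c = 1) (hb : b ≠ 0) (α : ℝ) (n₀ : ℤ) (ω : ℝ) :
    ‖dLCT a b d (fun n => Complex.exp (Complex.I * (α : ℂ)) *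
        Complex.exp (-(Complex.I * (a : ℂ) * (n₀ : ℂ) * (n : ℂ) / (b : ℂ))) * x (n - n₀)) ω‖ =
      ‖dLCT a b d x ω‖ := by
  set cc : ℂ := Complex.exp (((α - (a / b) * (n₀ : ℝ) ^ 2 / 2 - ω * (n₀ : ℝ) / b : ℝ) : ℂ)
      * Complex.I) with hcc
  have habs : ‖cc‖ = 1 := Complex.norm_exp_ofReal_mul_I _
  have key : dLCT a b d (fun n => Complex.exp (Complex.I * (α : ℂ)) *
        Complex.exp (-(Complex.I * (a : ℂ) * (n₀ : ℂ) * (n : ℂ) / (b : ℂ))) * x (n - n₀)) ω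
      = cc * dLCT a b d x ω := by
    unfold dLCT
    rw [← tsum_mul_left,
      ← (Equiv.subRight n₀).tsum_eq (fun m : ℤ => cc * (x m * lctKernel a b d ω (m : ℝ)))]
    refine tsum_congr fun n => ?_
    simp only [Equiv.subRight_apply]
    unfold lctKernel
    have h2 : Complex.exp (Complex.I * (α : ℂ)) *
        Complex.exp (-(Complex.I * (a : ℂ) * (n₀ : ℂ) * (n : ℂ) / (b : ℂ))) *
        Complex.exp ((Complex.I / 2) *
          (((a / b) * (n : ℝ) ^ 2 - (2 / b) * ω * (n : ℝ) + (d / b) * ω ^ 2 : ℝ) : ℂ)) =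
        cc * Complex.exp ((Complex.I / 2) *
          (((a / b) * ((n - n₀ : ℤ) : ℝ) ^ 2 - (2 / b) * ω * ((n - n₀ : ℤ) : ℝ)
            + (d / b) * ω ^ 2 : ℝ) : ℂ)) := by
      rw [hcc, ← Complex.exp_add, ← Complex.exp_add, ← Complex.exp_add]
      congr 1
      push_cast
      ring
    linear_combination (x (n - n₀) * (((2 * Real.pi * b : ℝ) : ℂ) ^ (-(1/2) : ℂ) *
      Complex.exp (-(Complex.I * Real.pi / 4)))) * h2
  rw [key, norm_mul, habs, one_mul]
end

section
/- Let x : ℤ → ℂ be finitely supported and let a, b, c, d be reals with ad − bc = 1, b ≠ 0. Then the reflected signal y[n] = e^{-i a n²/b} · conj(x[−n]) satisfies |L_{(a,b,c,d)}[y](ω)| = |L_{(a,b,c,d)}[x](ω)| for all ω ∈ ℝ. -/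
lemma lctKernel_ne_zero (a b d ω t : ℝ) (hb : b ≠ 0) : lctKernel a b d ω t ≠ 0 := by
  unfold lctKernel
  apply mul_ne_zero (mul_ne_zero ?_ (Complex.exp_ne_zero _)) (Complex.exp_ne_zero _)
  rw [Ne, Complex.cpow_eq_zero_iff]
  intro ⟨h, _⟩
  exact (mul_ne_zero (mul_ne_zero two_ne_zero Real.pi_ne_zero) hb) (by exact_mod_cast h)

lemma term_eq (x : ℤ → ℂ) (a b d ω : ℝ) (n : ℤ) :
    (Complex.exp (-(Complex.I * (a : ℂ) * (n : ℂ) ^ 2 / (b : ℂ))) * (starRingEnd ℂ) (x (-n))) *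
      lctKernel a b d ω (n : ℝ) * (starRingEnd ℂ) (lctKernel a b d ω 0) =
    (starRingEnd ℂ) (x (-n) * lctKernel a b d ω ((-n : ℤ) : ℝ)) * lctKernel a b d ω 0 := by
  unfold lctKernel
  simp only [map_mul, ← Complex.exp_conj, map_neg, map_div₀, Complex.conj_I, map_ofNat,
    Complex.conj_ofReal, map_mul]
  set P : ℂ := ((2 * Real.pi * b : ℝ) : ℂ) ^ (-(1/2) : ℂ) with hP
  set Q : ℂ := (starRingEnd ℂ) P with hQ
  set c : ℂ := (starRingEnd ℂ) (x (-n)) with hc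
  have key : Complex.exp (-(Complex.I * (a : ℂ) * (n : ℂ) ^ 2 / (b : ℂ))) *
      Complex.exp ((Complex.I / 2) *
        (((a / b) * (n : ℝ) ^ 2 - (2 / b) * ω * (n : ℝ) + (d / b) * ω ^ 2 : ℝ) : ℂ)) *
      Complex.exp ((-Complex.I / 2) *
        (((a / b) * (0:ℝ) ^ 2 - (2 / b) * ω * (0:ℝ) + (d / b) * ω ^ 2 : ℝ) : ℂ)) =
      Complex.exp ((-Complex.I / 2) *
        (((a / b) * ((-n : ℤ) : ℝ) ^ 2 - (2 / b) * ω * ((-n : ℤ) : ℝ) + (d / b) * ω ^ 2 : ℝ) : ℂ)) *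
      Complex.exp ((Complex.I / 2) *
        (((a / b) * (0:ℝ) ^ 2 - (2 / b) * ω * (0:ℝ) + (d / b) * ω ^ 2 : ℝ) : ℂ)) := by
    rw [← Complex.exp_add, ← Complex.exp_add, ← Complex.exp_add]
    congr 1
    push_cast
    ring
  linear_combination (c * P * Q * Complex.exp (-(Complex.I * (Real.pi : ℂ) / 4)) *
    Complex.exp (-(-Complex.I * (Real.pi : ℂ) / 4))) * key

theorem dlct_intensity_reflection (x : ℤ → ℂ) (hx : (Function.support x).Finite)
    (a b c d : ℝ) (habcd : a * d - b * c = 1) (hb : b ≠ 0) (ω : ℝ) :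
    ‖(dLCT a b d (fun n => Complex.exp (-(Complex.I * (a : ℂ) * (n : ℂ) ^ 2 / (b : ℂ))) *
        (starRingEnd ℂ) (x (-n))) ω)‖ =
      ‖dLCT a b d x ω‖ := by
  have CG := lctKernel a b d ω 0
  have hCG : lctKernel a b d ω 0 ≠ 0 := lctKernel_ne_zero a b d ω 0 hb
  have main : dLCT a b d (fun n => Complex.exp (-(Complex.I * (a : ℂ) * (n : ℂ) ^ 2 / (b : ℂ))) *
      (starRingEnd ℂ) (x (-n))) ω * (starRingEnd ℂ) (lctKernel a b d ω 0)
      = (starRingEnd ℂ) (dLCT a b d x ω) * lctKernel a b d ω 0 := by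
    unfold dLCT
    rw [← tsum_mul_right]
    simp only [starRingEnd_apply]
    rw [tsum_star, ← tsum_mul_right]
    rw [← (Equiv.neg ℤ).tsum_eq (fun m => star (x m * lctKernel a b d ω (m : ℝ)) * lctKernel a b d ω 0)]
    refine tsum_congr fun n => ?_
    simpa only [starRingEnd_apply, Equiv.neg_apply] using term_eq x a b d ω n
  have := congrArg (‖·‖) main
  rw [norm_mul, norm_mul, Complex.norm_conj, Complex.norm_conj] at this
  exact mul_right_cancel₀ (by simpa using hCG) this
end
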